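/- For natural numbers a ≤ n define C₋₁(n,a) = 0 if a and n−a are both odd, and C₋₁(n,a) = C(⌊n/2⌋, ⌊a/2⌋) otherwise. Then for every natural number n ≥ 3, the greatest common divisor gcd{ C₋₁(n,a) : 1 ≤ a ≤ n−1 } equals p if n = 2p^k for some prime p and some k ≥ 1, and equals 1 otherwise. -/

import Mathlib

/-- The value at `q = -1` of the Gaussian binomial coefficient `C(n,a)_q`:
`0` if `a` and `n - a` are both odd, and `C(⌊n/2⌋, ⌊a/2⌋)` otherwise. -/
def qBinomNegOne (n a : ℕ) : ℕ :=
  if Odd a ∧ Odd (n - a) then 0 else Nat.choose (n / 2) (a / 2)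

/-- `p ^ 2` does not divide `C(p^k, p^(k-1))` (its `p`-adic valuation is exactly `1`). -/
lemma choose_pow_not_sq_dvd {p k : ℕ} (hp : p.Prime) (hk : 1 ≤ k) :
    ¬ p ^ 2 ∣ Nat.choose (p ^ k) (p ^ (k - 1)) := by
  have hle : p ^ (k - 1) ≤ p ^ k := Nat.pow_le_pow_right hp.pos (Nat.sub_le _ _)
  have h0 : p ^ (k - 1) ≠ 0 := (pow_pos hp.pos _).ne'
  have h := Nat.Prime.emultiplicity_choose_prime_pow hp hle h0
  rw [multiplicity_pow_self_of_prime hp.prime] at h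
  intro hdvd
  have h2 : ((2:ℕ) : ℕ∞) ≤ emultiplicity p (Nat.choose (p ^ k) (p ^ (k - 1))) :=
    pow_dvd_iff_le_emultiplicity.mp hdvd
  rw [h, Nat.cast_le] at h2
  omega


/-- For a prime `q ≤ m`, `q` does not divide `C(m, q^(log_q m))` (no carries occur when
adding `q^(log_q m)` and `m - q^(log_q m)` in base `q`). -/
lemma not_dvd_choose_pow_log {q m : ℕ} (hq : q.Prime) (hqm : q ≤ m) :
    ¬ q ∣ Nat.choose m (q ^ Nat.log q m) := by
  have hm0 : m ≠ 0 := by have := hq.two_le; omega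
  set e := Nat.log q m with he
  have hle : q ^ e ≤ m := Nat.pow_log_le_self q hm0
  have hmul := Nat.Prime.emultiplicity_choose hq hle (Nat.lt_succ_self e)
  rw [← emultiplicity_eq_zero, hmul]
  have hempty : ({i ∈ Finset.Ico 1 (e + 1) | q ^ i ≤ q ^ e % q ^ i + (m - q ^ e) % q ^ i})
      = (∅ : Finset ℕ) := by
    apply Finset.filter_false_of_mem
    intro i hi
    rw [Finset.mem_Ico] at hi
    have h1 : q ^ e % q ^ i = 0 :=
      Nat.eq_zero_of_dvd_of_lt ((Nat.dvd_mod_iff dvd_rfl).mpr (pow_dvd_pow q (by omega : i ≤ e))) (Nat.mod_lt _ (pow_pos hq.pos i))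
    rw [h1, zero_add]
    exact Nat.not_le.mpr (Nat.mod_lt _ (pow_pos hq.pos i))
  rw [hempty]
  simp

/-- The gcd of the interior binomial coefficients of row `p^k` is `p`. -/
lemma gcd_interior_choose_prime_pow {p k : ℕ} (hp : p.Prime) (hk : 1 ≤ k) :
    (Finset.Icc 1 (p ^ k - 1)).gcd (Nat.choose (p ^ k)) = p := by
  have hm2 : 2 ≤ p ^ k := le_trans hp.two_le (Nat.le_self_pow (by omega) p)
  set G := (Finset.Icc 1 (p ^ k - 1)).gcd (Nat.choose (p ^ k)) with hG
  have hpg : p ∣ G := by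
    apply Finset.dvd_gcd
    intro a ha
    rw [Finset.mem_Icc] at ha
    exact Nat.Prime.dvd_choose_pow hp (by omega) (by omega)
  have h1 : (1 : ℕ) ∈ Finset.Icc 1 (p ^ k - 1) := by
    rw [Finset.mem_Icc]; omega
  have hGm : G ∣ p ^ k := by
    have := Finset.gcd_dvd (f := Nat.choose (p ^ k)) h1
    simpa using this
  have hel : p ^ (k - 1) ∈ Finset.Icc 1 (p ^ k - 1) := by
    rw [Finset.mem_Icc]
    have hlt : p ^ (k - 1) < p ^ k := Nat.pow_lt_pow_right hp.one_lt (by omega)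
    have hpos : 0 < p ^ (k - 1) := pow_pos hp.pos _
    omega
  have hgc : G ∣ Nat.choose (p ^ k) (p ^ (k - 1)) := Finset.gcd_dvd hel
  obtain ⟨j, hj, hje⟩ := (Nat.dvd_prime_pow hp).mp hGm
  have hj1 : 1 ≤ j := by
    rcases Nat.eq_zero_or_pos j with rfl | h
    · rw [pow_zero] at hje
      rw [hje] at hpg
      have := Nat.le_of_dvd one_pos hpg
      have := hp.two_le
      omega
    · exact h
  have hj2 : j < 2 := by
    by_contra hc
    push_neg at hc
    exact choose_pow_not_sq_dvd hp hk ((pow_dvd_pow p hc).trans (hje ▸ hgc))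
  have : j = 1 := by omega
  rw [hje, this, pow_one]

/-- The gcd of the interior binomial coefficients of row `m` is `1` when `m ≥ 2` is not
a prime power. -/
lemma gcd_interior_choose_not_pp {m : ℕ} (hm : 2 ≤ m)
    (h : ¬ ∃ p k : ℕ, p.Prime ∧ 1 ≤ k ∧ m = p ^ k) :
    (Finset.Icc 1 (m - 1)).gcd (Nat.choose m) = 1 := by
  by_contra hg
  set G := (Finset.Icc 1 (m - 1)).gcd (Nat.choose m) with hG
  obtain ⟨q, hq, hqG⟩ := Nat.exists_prime_and_dvd hg
  have h1 : (1 : ℕ) ∈ Finset.Icc 1 (m - 1) := by rw [Finset.mem_Icc]; omega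
  have hGm : G ∣ m := by
    have := Finset.gcd_dvd (f := Nat.choose m) h1
    simpa using this
  have hqm : q ∣ m := hqG.trans hGm
  have hqle : q ≤ m := Nat.le_of_dvd (by omega) hqm
  have he1 : 1 ≤ Nat.log q m := Nat.log_pos hq.one_lt hqle
  have hlt : q ^ Nat.log q m < m := by
    rcases lt_or_eq_of_le (Nat.pow_log_le_self q (show m ≠ 0 by omega)) with h' | h'
    · exact h'
    · exact absurd ⟨q, Nat.log q m, hq, he1, h'.symm⟩ h
  have hmem : q ^ Nat.log q m ∈ Finset.Icc 1 (m - 1) := by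
    rw [Finset.mem_Icc]
    have := pow_pos hq.pos (Nat.log q m)
    omega
  exact not_dvd_choose_pow_log hq hqle (hqG.trans (Finset.gcd_dvd hmem))

/-- For even `n = 2m`, the gcd of the interior `q = -1` binomials reduces to the gcd of the
interior binomials of row `m`. -/
lemma gcd_even {m : ℕ} (hm : 2 ≤ m) :
    (Finset.Icc 1 (2 * m - 1)).gcd (fun a => qBinomNegOne (2 * m) a) =
    (Finset.Icc 1 (m - 1)).gcd (Nat.choose m) := by
  have heval : ∀ b : ℕ, qBinomNegOne (2 * m) (2 * b) = Nat.choose m b := by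
    intro b
    unfold qBinomNegOne
    rw [if_neg]
    · congr 1 <;> omega
    · rintro ⟨h1, -⟩
      exact (Nat.not_odd_iff_even.mpr ⟨b, by omega⟩) h1
  apply Nat.dvd_antisymm
  · apply Finset.dvd_gcd
    intro b hb
    rw [Finset.mem_Icc] at hb
    have h2b : 2 * b ∈ Finset.Icc 1 (2 * m - 1) := by rw [Finset.mem_Icc]; omega
    have := Finset.gcd_dvd (f := fun a => qBinomNegOne (2 * m) a) h2b
    simpa [heval b] using this
  · apply Finset.dvd_gcd
    intro a ha
    rw [Finset.mem_Icc] at ha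
    rcases Nat.even_or_odd a with heven | hodd
    · obtain ⟨b, hb⟩ := heven
      have hbmem : b ∈ Finset.Icc 1 (m - 1) := by rw [Finset.mem_Icc]; omega
      have := Finset.gcd_dvd (f := Nat.choose m) hbmem
      have h2 : qBinomNegOne (2 * m) a = Nat.choose m b := by
        rw [show a = 2 * b by omega]; exact heval b
      simpa [h2] using this
    · have h0 : qBinomNegOne (2 * m) a = 0 := by
        unfold qBinomNegOne
        rw [if_pos]
        exact ⟨hodd, Nat.Even.sub_odd (by omega) ⟨m, by omega⟩ hodd⟩
      simp [h0]

theorem gcd_interior_qBinomNegOne (n : ℕ) (hn : 3 ≤ n) :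
    (∀ p k : ℕ, p.Prime → 1 ≤ k → n = 2 * p ^ k →
      (Finset.Icc 1 (n - 1)).gcd (fun a => qBinomNegOne n a) = p) ∧
    ((¬ ∃ p k : ℕ, p.Prime ∧ 1 ≤ k ∧ n = 2 * p ^ k) →
      (Finset.Icc 1 (n - 1)).gcd (fun a => qBinomNegOne n a) = 1) := by
  rcases Nat.even_or_odd n with he | ho
  · obtain ⟨m, hnm⟩ : ∃ m, n = 2 * m := ⟨n / 2, by
      have := he.two_dvd; omega⟩
    subst hnm
    have hm : 2 ≤ m := by omega
    rw [gcd_even hm]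
    constructor
    · intro p k hp hk hpk
      have : m = p ^ k := by omega
      subst this
      exact gcd_interior_choose_prime_pow hp hk
    · intro hnot
      apply gcd_interior_choose_not_pp hm
      rintro ⟨p, k, hp, hk, rfl⟩
      exact hnot ⟨p, k, hp, hk, rfl⟩
  · have hodd1 : qBinomNegOne n 1 = 1 := by
      unfold qBinomNegOne
      rw [if_neg]
      · simp
      · rintro ⟨-, h2⟩
        obtain ⟨t, ht⟩ := ho
        exact (Nat.not_odd_iff_even.mpr ⟨t, by omega⟩) h2
    have h1 : (1 : ℕ) ∈ Finset.Icc 1 (n - 1) := by rw [Finset.mem_Icc]; omega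
    have hgd : (Finset.Icc 1 (n - 1)).gcd (fun a => qBinomNegOne n a) ∣ 1 := by
      have := Finset.gcd_dvd (f := fun a => qBinomNegOne n a) h1
      simpa [hodd1] using this
    have hg1 := Nat.dvd_one.mp hgd
    constructor
    · intro p k hp hk hpk
      obtain ⟨t, ht⟩ := ho
      omega
    · intro _
      exact hg1
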